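/- Let (G, f) be a leveled graph on n nodes with level function f, and let L be the connection matrix of a homogeneous flow stream network: whenever nodes i, j are connected with f(j) − f(i) = 1 then ℓ_{ji} = d+q and ℓ_{ij} = d (with d, q > 0). Define v ∈ ℝⁿ by v_i = (d/(d+q))^{f(i)}. Let E be a connection matrix satisfying: e_{ij} = e_{ji} ∈ {0,1} whenever f(i) = f(j), and e_{ij} = e_{ji} = 0 whenever f(i) ≠ f(j) (i ≠ j), with columns of E summing to zero. Then for all i ≠ j and all k ≥ 0, v_i(ℓ_{ij} + k e_{ij}) = v_j(ℓ_{ji} + k e_{ji}); i.e., diag(v)·(L + kE) is symmetric. -/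
import Mathlib


open Matrix

/-- For a homogeneous flow stream network `(G, f, L)` with an
edge-modification matrix `E` adding bi-directional edges only within levels, the
vector `v_i = (d/(d+q))^{f(i)}` symmetrizes `L + kE`:
`diag(v)·(L + kE)` is symmetric for every `k ≥ 0`. -/
theorem diag_v_symmetrizes_homogeneous_flow {n : ℕ} (hn : 0 < n)
    (d q : ℝ) (hd : 0 < d) (hq : 0 < q)
    (f : Fin n → ℕ)
    (hattain : ∀ (i : Fin n) (m : ℕ), m ≤ f i → ∃ j, f j = m)
    (L : Matrix (Fin n) (Fin n) ℝ)
    (hLcol : ∀ j, ∑ i, L i j = 0)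
    (hL : ∀ i j : Fin n, i ≠ j →
      (L i j = 0 ∧ L j i = 0) ∨
      (f j = f i + 1 ∧ L j i = d + q ∧ L i j = d) ∨
      (f i = f j + 1 ∧ L i j = d + q ∧ L j i = d))
    (E : Matrix (Fin n) (Fin n) ℝ)
    (hEcol : ∀ j, ∑ i, E i j = 0)
    (hEsame : ∀ i j : Fin n, i ≠ j → f i = f j →
      E i j = E j i ∧ (E i j = 0 ∨ E i j = 1))
    (hEdiff : ∀ i j : Fin n, i ≠ j → f i ≠ f j → E i j = 0 ∧ E j i = 0) :
    ∀ k : ℝ, 0 ≤ k →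
      ((∀ i j : Fin n, (d / (d + q)) ^ f i * (L i j + k * E i j) =
          (d / (d + q)) ^ f j * (L j i + k * E j i)) ∧
       (Matrix.diagonal (fun i => (d / (d + q)) ^ f i : Fin n → ℝ) *
          (L + k • E)).IsSymm) := by
  intro k hk
  have hdq : d + q ≠ 0 := by positivity
  have key : ∀ i j : Fin n, (d / (d + q)) ^ f i * (L i j + k * E i j) =
      (d / (d + q)) ^ f j * (L j i + k * E j i) := by
    intro i j
    by_cases hij : i = j
    · subst hij; ring
    · rcases hL i j hij with ⟨h1, h2⟩ | ⟨hf, h1, h2⟩ | ⟨hf, h1, h2⟩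
      · by_cases hfe : f i = f j
        · obtain ⟨hE, _⟩ := hEsame i j hij hfe
          rw [h1, h2, hE, hfe]
        · obtain ⟨hE1, hE2⟩ := hEdiff i j hij hfe
          rw [h1, h2, hE1, hE2]; ring
      · have hfe : f i ≠ f j := by omega
        obtain ⟨hE1, hE2⟩ := hEdiff i j hij hfe
        rw [h1, h2, hE1, hE2, hf, pow_succ]
        field_simp
        ring
      · have hfe : f i ≠ f j := by omega
        obtain ⟨hE1, hE2⟩ := hEdiff i j hij hfe
        rw [h1, h2, hE1, hE2, hf, pow_succ]
        field_simp
        ring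
  refine ⟨key, ?_⟩
  ext i j
  simp only [Matrix.transpose_apply, Matrix.diagonal_mul, Matrix.add_apply,
    Matrix.smul_apply, smul_eq_mul]
  exact key j i
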